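/- For any ξ ∈ ℍⁿ, λ > 0 and β ∈ ℝ, the generalized CR inversion satisfies Φ_{ξ,λ}^β(B_λ(ξ) ∖ {ξ}) = Σ_λ(ξ) and Φ_{ξ,λ}^β(Σ_λ(ξ)) = B_λ(ξ) ∖ {ξ}, where B_λ(ξ) = {ζ : d_H(ξ,ζ) < λ} and Σ_λ(ξ) = ℍⁿ ∖ closure(B_λ(ξ)). -/

import Mathlib

open Complex Filter Topology MeasureTheory

noncomputable section

/-- The Heisenberg group ℍⁿ as ℂⁿ × ℝ. -/
abbrev Heis (n : ℕ) := (Fin n → ℂ) × ℝ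

namespace Heis

variable {n : ℕ}

/-- Hermitian inner product ⟨z,z'⟩ = Σ_j z_j conj(z'_j). -/
def hermInner (z w : Fin n → ℂ) : ℂ := ∑ j, z j * (starRingEnd ℂ) (w j)

/-- Squared Euclidean norm |z|² = Σ_j |z_j|². -/
def nsq (z : Fin n → ℂ) : ℝ := ∑ j, Complex.normSq (z j)

/-- Group law (z,t)·(z',t') = (z+z', t+t'+2 Im⟨z,z'⟩). -/
def hmul (a b : Heis n) : Heis n :=
  (a.1 + b.1, a.2 + b.2 + 2 * (hermInner a.1 b.1).im)

/-- Group inverse: ζ⁻¹ = −ζ. -/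
def hinv (a : Heis n) : Heis n := (-a.1, -a.2)

/-- Korányi norm |(z,t)|_H = (|z|⁴ + t²)^{1/4}. -/
def korNorm (a : Heis n) : ℝ := ((nsq a.1) ^ 2 + a.2 ^ 2) ^ ((1 : ℝ)/4)

/-- Korányi distance d_H(ξ,ζ) = |ζ⁻¹·ξ|_H. -/
def dH (a b : Heis n) : ℝ := korNorm (hmul (hinv b) a)

/-- Open Korányi ball B_λ(ξ). -/
def ball (ξ : Heis n) (lam : ℝ) : Set (Heis n) := {ζ | dH ξ ζ < lam}

/-- Left translation τ_ξ. -/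
def tau (ξ ζ : Heis n) : Heis n := hmul ξ ζ

/-- Dilation δ_λ(z,t) = (λz, λ²t). -/
def dil (lam : ℝ) (a : Heis n) : Heis n := (fun j => (lam : ℂ) * a.1 j, lam ^ 2 * a.2)

/-- Rotation ρ_M(z,t) = (Mz,t). -/
def rot (M : Matrix (Fin n) (Fin n) ℂ) (a : Heis n) : Heis n := (M.mulVec a.1, a.2)

/-- Inversion ι(z,t) = (conj z, −t). -/
def iota (a : Heis n) : Heis n := (fun j => (starRingEnd ℂ) (a.1 j), -a.2)

/-- w = t + i|z|². -/
def wC (a : Heis n) : ℂ := (a.2 : ℂ) + Complex.I * ((nsq a.1 : ℝ) : ℂ)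

/-- CR inversion 𝒥(z,t) = (z/w, −t/|w|²). -/
def crInv (a : Heis n) : Heis n :=
  (fun j => a.1 j / wC a, -a.2 / Complex.normSq (wC a))

/-- Angles θ_k for the rotation matrix M_{ξ,β}. -/
def theta (ξ : Heis n) (β : ℝ) (k : Fin n) : ℝ :=
  if ξ.1 k ≠ 0 then 2 * (ξ.1 k).arg + (wC ξ + Complex.I * (β : ℂ)).arg else 0

/-- The unitary diagonal matrix M_{ξ,β} = diag(e^{iθ₁},…,e^{iθₙ}). -/
def Mmat (ξ : Heis n) (β : ℝ) : Matrix (Fin n) (Fin n) ℂ :=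
  Matrix.diagonal fun k => Complex.exp (Complex.I * ((theta ξ β k : ℝ) : ℂ))

/-- Generalized CR inversion Φ_{ξ,λ}^β = τ_ξ ∘ ρ_{M_{ξ,β}} ∘ δ_{λ²} ∘ 𝒥 ∘ ι ∘ τ_ξ⁻¹. -/
def Phi (ξ : Heis n) (lam β : ℝ) (ζ : Heis n) : Heis n :=
  tau ξ (rot (Mmat ξ β) (dil (lam ^ 2) (crInv (iota (hmul (hinv ξ) ζ)))))

/-- Direction of the vector field X_j at p. -/
def XVec (j : Fin n) (p : Heis n) : Heis n := (Pi.single j (1 : ℂ), 2 * (p.1 j).im)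

/-- Direction of the vector field Y_j at p. -/
def YVec (j : Fin n) (p : Heis n) : Heis n := (Pi.single j Complex.I, -2 * (p.1 j).re)

/-- The vector field X_j acting on functions. -/
def Xop (j : Fin n) (u : Heis n → ℝ) (p : Heis n) : ℝ := fderiv ℝ u p (XVec j p)

/-- The vector field Y_j acting on functions. -/
def Yop (j : Fin n) (u : Heis n → ℝ) (p : Heis n) : ℝ := fderiv ℝ u p (YVec j p)

/-- Sub-Laplacian Δ_H = Σ_j (X_j² + Y_j²). -/
def subLap (u : Heis n → ℝ) (p : Heis n) : ℝ :=
  ∑ j, (Xop j (Xop j u) p + Yop j (Yop j u) p)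

/-- Squared length of the horizontal gradient |∇_H u|² = Σ_j ((X_j u)² + (Y_j u)²). -/
def gradHSq (u : Heis n → ℝ) (p : Heis n) : ℝ :=
  ∑ j, ((Xop j u p) ^ 2 + (Yop j u p) ^ 2)

/-- Generalized Kelvin transform u_{ξ,λ}^β(η) = (λ/d_H(η,ξ))^{Q−2} u(Φ_{ξ,λ}^β(η)), Q−2 = 2n. -/
def kelvin (u : Heis n → ℝ) (ξ : Heis n) (lam β : ℝ) (η : Heis n) : ℝ :=
  (lam / dH η ξ) ^ (2 * n) * u (Phi ξ lam β η)

/-- The filter |ζ|_H → ∞ on ℍⁿ. -/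
def atInftyH (n : ℕ) : Filter (Heis n) := Filter.comap korNorm Filter.atTop

end Heis

open Heis

namespace HeisAux
variable {n : ℕ}

/-- squared Korányi norm to the 4th: -/
def K4 (a : Heis n) : ℝ := (nsq a.1) ^ 2 + a.2 ^ 2

lemma nsq_nonneg (z : Fin n → ℂ) : 0 ≤ nsq z :=
  Finset.sum_nonneg fun _ _ => Complex.normSq_nonneg _

lemma nsq_eq_zero_iff {z : Fin n → ℂ} : nsq z = 0 ↔ z = 0 := by
  unfold nsq
  rw [Finset.sum_eq_zero_iff_of_nonneg (fun _ _ => Complex.normSq_nonneg _)]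
  constructor
  · intro h; funext j; simpa [Complex.normSq_eq_zero] using h j (Finset.mem_univ j)
  · intro h j _; simp [h]

lemma K4_nonneg (a : Heis n) : 0 ≤ K4 a := add_nonneg (sq_nonneg _) (sq_nonneg _)

lemma K4_eq_zero_iff {a : Heis n} : K4 a = 0 ↔ a = 0 := by
  unfold K4
  constructor
  · intro h
    have h1 : nsq a.1 ^ 2 = 0 ∧ a.2 ^ 2 = 0 := by
      constructor <;> nlinarith [sq_nonneg (nsq a.1), sq_nonneg a.2]
    have hz : a.1 = 0 := nsq_eq_zero_iff.mp (by nlinarith [h1.1])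
    have ht : a.2 = 0 := by nlinarith [h1.2]
    exact Prod.ext hz ht
  · rintro rfl; simp [nsq_eq_zero_iff.mpr rfl]

lemma korNorm_eq (a : Heis n) : korNorm a = (K4 a) ^ ((1:ℝ)/4) := rfl

lemma korNorm_nonneg (a : Heis n) : 0 ≤ korNorm a :=
  Real.rpow_nonneg (K4_nonneg a) _

lemma korNorm_pos {a : Heis n} (h : a ≠ 0) : 0 < korNorm a := by
  have : 0 < K4 a := lt_of_le_of_ne (K4_nonneg a) (fun hc => h (K4_eq_zero_iff.mp hc.symm))
  exact Real.rpow_pos_of_pos this _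

lemma korNorm_eq_zero_iff {a : Heis n} : korNorm a = 0 ↔ a = 0 := by
  rw [korNorm_eq, Real.rpow_eq_zero (K4_nonneg a) (by norm_num), K4_eq_zero_iff]

lemma normSq_wC (a : Heis n) : Complex.normSq (wC a) = K4 a := by
  simp [wC, Complex.normSq_apply, K4]; ring

lemma wC_ne_zero {a : Heis n} (h : a ≠ 0) : wC a ≠ 0 := by
  intro hc
  have := normSq_wC a
  rw [hc] at this
  exact h (K4_eq_zero_iff.mp (by simpa using this.symm))

end HeisAux

namespace HeisAux
variable {n : ℕ}

lemma hermInner_add_right (z x y : Fin n → ℂ) :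
    hermInner z (x + y) = hermInner z x + hermInner z y := by
  simp [hermInner, map_add, mul_add, Finset.sum_add_distrib]

lemma hermInner_neg_left (z x : Fin n → ℂ) : hermInner (-z) x = -hermInner z x := by
  simp [hermInner, Finset.sum_neg_distrib]

lemma hermInner_neg_right (z x : Fin n → ℂ) : hermInner z (-x) = -hermInner z x := by
  simp [hermInner, Finset.sum_neg_distrib]

lemma hermInner_swap (x y : Fin n → ℂ) :
    hermInner y x = (starRingEnd ℂ) (hermInner x y) := by
  rw [hermInner, hermInner, map_sum]
  congr 1; funext j
  rw [map_mul, RingHomInvPair.comp_apply_eq]  -- conj (conj y) = y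
  ring

lemma hermInner_self_im (z : Fin n → ℂ) : (hermInner z z).im = 0 := by
  simp [hermInner, Complex.mul_conj, Complex.im_sum]

lemma hermInner_swap_im (x y : Fin n → ℂ) :
    (hermInner y x).im = -(hermInner x y).im := by
  rw [hermInner_swap]; simp

lemma cancel_left (ξ a : Heis n) : hmul (hinv ξ) (hmul ξ a) = a := by
  refine Prod.ext ?_ ?_
  · show -ξ.1 + (ξ.1 + a.1) = a.1; abel
  · show -ξ.2 + (ξ.2 + a.2 + 2 * (hermInner ξ.1 a.1).im)
      + 2 * (hermInner (-ξ.1) (ξ.1 + a.1)).im = a.2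
    rw [hermInner_neg_left, hermInner_add_right]
    simp [hermInner_self_im]
    ring

lemma cancel_left' (ξ a : Heis n) : hmul ξ (hmul (hinv ξ) a) = a := by
  refine Prod.ext ?_ ?_
  · show ξ.1 + (-ξ.1 + a.1) = a.1; abel
  · show ξ.2 + (-ξ.2 + a.2 + 2 * (hermInner (-ξ.1) a.1).im)
      + 2 * (hermInner ξ.1 (-ξ.1 + a.1)).im = a.2
    rw [hermInner_neg_left, hermInner_add_right, hermInner_neg_right]
    simp [hermInner_self_im]
    ring

lemma hinv_hmul_self (ξ : Heis n) : hmul (hinv ξ) ξ = 0 := by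
  refine Prod.ext ?_ ?_
  · show -ξ.1 + ξ.1 = 0; abel
  · show -ξ.2 + ξ.2 + 2 * (hermInner (-ξ.1) ξ.1).im = 0
    rw [hermInner_neg_left]
    simp [hermInner_self_im]

lemma hmul_inv_eq (ξ b : Heis n) : hmul (hinv (hmul ξ b)) ξ = hinv b := by
  refine Prod.ext ?_ ?_
  · show -(ξ.1 + b.1) + ξ.1 = -b.1; abel
  · show -(ξ.2 + b.2 + 2 * (hermInner ξ.1 b.1).im)
      + ξ.2 + 2 * (hermInner (-(ξ.1 + b.1)) ξ.1).im = -b.2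
    rw [hermInner_neg_left]
    have : hermInner (ξ.1 + b.1) ξ.1 = hermInner ξ.1 ξ.1 + hermInner b.1 ξ.1 := by
      simp [hermInner, add_mul, Finset.sum_add_distrib]
    rw [this]
    have h2 := hermInner_swap_im ξ.1 b.1
    simp [hermInner_self_im]
    linarith

lemma korNorm_hinv (a : Heis n) : korNorm (hinv a) = korNorm a := by
  have : nsq (-a.1) = nsq a.1 := by simp [nsq]
  simp [korNorm, hinv, this]

lemma dH_eq (ξ ζ : Heis n) : dH ξ ζ = korNorm (hmul (hinv ξ) ζ) := by
  have h : ζ = hmul ξ (hmul (hinv ξ) ζ) := (cancel_left' ξ ζ).symm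
  rw [dH]
  conv_lhs => rw [h]
  rw [hmul_inv_eq, korNorm_hinv]

lemma dH_hmul (ξ b : Heis n) : dH ξ (hmul ξ b) = korNorm b := by
  rw [dH_eq, cancel_left]

lemma dH_self_eq_zero_iff {ξ ζ : Heis n} : dH ξ ζ = 0 ↔ ζ = ξ := by
  rw [dH_eq, korNorm_eq_zero_iff]
  have hz : hmul ξ (0 : Heis n) = ξ := by
    refine Prod.ext ?_ ?_
    · show ξ.1 + 0 = ξ.1; simp
    · show ξ.2 + 0 + 2 * (hermInner ξ.1 0).im = ξ.2
      simp [hermInner]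
  constructor
  · intro h
    have h2 := congrArg (hmul ξ) h
    rw [cancel_left', hz] at h2
    exact h2
  · rintro rfl; exact hinv_hmul_self _

lemma korNorm_dil {s : ℝ} (hs : 0 ≤ s) (a : Heis n) : korNorm (dil s a) = s * korNorm a := by
  have h1 : nsq (fun j => (s:ℂ) * a.1 j) = s^2 * nsq a.1 := by
    simp [nsq, Complex.normSq_mul, Finset.mul_sum, Complex.normSq_ofReal, sq]
  rw [korNorm_eq, korNorm_eq, K4, K4]
  have h2 : nsq (dil s a).1 = s ^ 2 * nsq a.1 := h1
  have h3 : (dil s a).2 = s ^ 2 * a.2 := rfl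
  rw [h2, h3]
  have h4 : (s ^ 2 * nsq a.1) ^ 2 + (s ^ 2 * a.2) ^ 2
      = s ^ 4 * (nsq a.1 ^ 2 + a.2 ^ 2) := by ring
  rw [h4, Real.mul_rpow (by positivity) (add_nonneg (sq_nonneg _) (sq_nonneg _))]
  congr 1
  rw [show (s:ℝ) ^ 4 = (s ^ 4 : ℝ) from rfl, ← Real.rpow_natCast s 4,
    ← Real.rpow_mul hs]
  norm_num

/-- The "centered" inversion map. -/
def g (ξ : Heis n) (lam β : ℝ) (a : Heis n) : Heis n :=
  rot (Mmat ξ β) (dil (lam ^ 2) (crInv (iota a)))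

lemma Phi_eq (ξ : Heis n) (lam β : ℝ) (ζ : Heis n) :
    Phi ξ lam β ζ = hmul ξ (g ξ lam β (hmul (hinv ξ) ζ)) := rfl

lemma nsq_conj (z : Fin n → ℂ) : nsq (fun j => (starRingEnd ℂ) (z j)) = nsq z := by
  simp [nsq]

lemma wC_iota (a : Heis n) : wC (iota a) = -((starRingEnd ℂ) (wC a)) := by
  simp only [wC, iota, nsq_conj]
  simp [Complex.ext_iff]

lemma g_fst (ξ : Heis n) (lam β : ℝ) (a : Heis n) (k : Fin n) :
    (g ξ lam β a).1 k = Complex.exp (Complex.I * ((theta ξ β k : ℝ) : ℂ)) *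
      (((lam ^ 2 : ℝ) : ℂ) * ((starRingEnd ℂ) (a.1 k) / (-((starRingEnd ℂ) (wC a))))) := by
  show (Mmat ξ β).mulVec _ k = _
  rw [Mmat, Matrix.mulVec_diagonal]
  congr 2
  show ((lam ^ 2 : ℝ) : ℂ) * ((iota a).1 k / wC (iota a)) = _
  rw [wC_iota]
  rfl

lemma g_snd (ξ : Heis n) (lam β : ℝ) (a : Heis n) :
    (g ξ lam β a).2 = (lam ^ 2) ^ 2 * (a.2 / Complex.normSq (wC a)) := by
  show (lam ^ 2) ^ 2 * (-(iota a).2 / Complex.normSq (wC (iota a))) = _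
  rw [wC_iota]
  simp [iota]

lemma normSq_exp_I (θ : ℝ) : Complex.normSq (Complex.exp (Complex.I * (θ : ℂ))) = 1 := by
  rw [Complex.normSq_eq_norm_sq, Complex.norm_exp_I_mul_ofReal]
  simp

lemma nsq_g (ξ : Heis n) (lam β : ℝ) (a : Heis n) :
    nsq (g ξ lam β a).1 = (lam ^ 2) ^ 2 * (nsq a.1 / Complex.normSq (wC a)) := by
  unfold nsq
  rw [Finset.sum_div, Finset.mul_sum]
  congr 1; funext k
  rw [g_fst]
  rw [Complex.normSq_mul, normSq_exp_I, one_mul, Complex.normSq_mul,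
    Complex.normSq_div, Complex.normSq_neg, Complex.normSq_conj,
    Complex.normSq_conj, Complex.normSq_ofReal]
  ring

lemma wC_g {a : Heis n} (ξ : Heis n) (lam β : ℝ) (h : a ≠ 0) :
    wC (g ξ lam β a) = (((lam ^ 2) ^ 2 : ℝ) : ℂ) / (starRingEnd ℂ) (wC a) := by
  have hw : wC a ≠ 0 := wC_ne_zero h
  have hcw : (starRingEnd ℂ) (wC a) ≠ 0 := by simpa using hw
  have hK : (Complex.normSq (wC a) : ℝ) ≠ 0 := by simpa using hw
  rw [wC, g_snd, nsq_g]
  have hmc : wC a * (starRingEnd ℂ) (wC a) = (Complex.normSq (wC a) : ℂ) :=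
    Complex.mul_conj _
  have : ((((lam ^ 2) ^ 2 * (a.2 / Complex.normSq (wC a)) : ℝ)) : ℂ)
      + Complex.I * (((lam ^ 2) ^ 2 * (nsq a.1 / Complex.normSq (wC a)) : ℝ) : ℂ)
      = (((lam ^ 2) ^ 2 : ℝ) : ℂ) * wC a / (Complex.normSq (wC a) : ℂ) := by
    rw [wC]
    push_cast
    ring
  rw [this, ← hmc]
  field_simp

lemma K4_g {a : Heis n} (ξ : Heis n) (lam β : ℝ) (h : a ≠ 0) :
    K4 (g ξ lam β a) = (lam ^ 2) ^ 4 / K4 a := by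
  have := congrArg Complex.normSq (wC_g ξ lam β h)
  rw [normSq_wC, Complex.normSq_div, Complex.normSq_conj, Complex.normSq_ofReal,
    normSq_wC] at this
  rw [this]
  ring_nf

lemma korNorm_g {a : Heis n} (ξ : Heis n) {lam : ℝ} (β : ℝ) (h : a ≠ 0) (hlam : 0 < lam) :
    korNorm (g ξ lam β a) = lam ^ 2 / korNorm a := by
  rw [korNorm_eq, korNorm_eq, K4_g ξ lam β h,
    Real.div_rpow (by positivity) (K4_nonneg a)]
  congr 1
  rw [show ((lam ^ 2) ^ 4 : ℝ) = (lam ^ 2) ^ (4:ℕ) from rfl, ← Real.rpow_natCast (lam^2) 4,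
    ← Real.rpow_mul (by positivity)]
  norm_num

lemma g_ne_zero {a : Heis n} (ξ : Heis n) {lam : ℝ} (β : ℝ) (h : a ≠ 0) (hlam : 0 < lam) :
    g ξ lam β a ≠ 0 := by
  intro hc
  have := korNorm_g ξ β h hlam
  rw [hc, korNorm_eq_zero_iff.mpr rfl] at this
  have h2 : 0 < lam ^ 2 / korNorm a := div_pos (by positivity) (korNorm_pos h)
  rw [← this] at h2
  exact lt_irrefl _ h2

lemma g_involution {a : Heis n} (ξ : Heis n) {lam : ℝ} (β : ℝ) (h : a ≠ 0) (hlam : 0 < lam) :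
    g ξ lam β (g ξ lam β a) = a := by
  have hw : wC a ≠ 0 := wC_ne_zero h
  have hcw : (starRingEnd ℂ) (wC a) ≠ 0 := by simpa using hw
  have hK : (Complex.normSq (wC a) : ℝ) ≠ 0 := by simpa using hw
  have hL : (lam : ℝ) ^ 2 ≠ 0 := by positivity
  refine Prod.ext (funext fun k => ?_) ?_
  · rw [g_fst, g_fst, wC_g ξ lam β h]
    set e := Complex.exp (Complex.I * ((theta ξ β k : ℝ) : ℂ)) with he
    have hee : e * (starRingEnd ℂ) e = 1 := by
      rw [Complex.mul_conj, normSq_exp_I]; norm_num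
    have hLc : (((lam ^ 2 : ℝ)) : ℂ) ≠ 0 := by
      simpa using hL
    rw [map_mul, map_mul, map_div₀, map_neg]
    rw [RingHomInvPair.comp_apply_eq, RingHomInvPair.comp_apply_eq]
    have hconjL : (starRingEnd ℂ) (((lam ^ 2 : ℝ)) : ℂ) = ((lam ^ 2 : ℝ) : ℂ) :=
      Complex.conj_ofReal _
    have hconjL2 : (starRingEnd ℂ) ((((lam ^ 2) ^ 2 : ℝ)) : ℂ) = (((lam ^ 2) ^ 2 : ℝ) : ℂ) :=
      Complex.conj_ofReal _
    rw [map_div₀, hconjL, hconjL2]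
    have hL2c : ((((lam ^ 2) ^ 2 : ℝ)) : ℂ) ≠ 0 := by
      simp only [ne_eq, Complex.ofReal_eq_zero]; positivity
    field_simp
    have hden : ((lam ^ 4 : ℝ) : ℂ) ≠ 0 := Complex.ofReal_ne_zero.mpr (by positivity)
    rw [div_eq_iff hden, Complex.conj_conj]
    push_cast
    linear_combination ((lam:ℂ) ^ 2 * (lam:ℂ) ^ 2 * a.1 k * wC a) * hee
  · rw [g_snd, g_snd]
    have h2 : Complex.normSq (wC (g ξ lam β a)) = (lam ^ 2) ^ 4 / Complex.normSq (wC a) := by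
      rw [wC_g ξ lam β h, Complex.normSq_div, Complex.normSq_conj, Complex.normSq_ofReal]
      ring_nf
    rw [h2]
    field_simp

end HeisAux

namespace HeisAux
variable {n : ℕ}

lemma continuous_korNorm : Continuous (korNorm : Heis n → ℝ) := by
  have h14 : Continuous fun x : ℝ => x ^ ((1:ℝ)/4) :=
    Real.continuous_rpow_const (by norm_num)
  apply h14.comp
  have hn : Continuous fun a : Heis n => nsq a.1 := by
    unfold nsq
    exact continuous_finset_sum _ fun j _ =>
      Complex.continuous_normSq.comp ((continuous_apply j).comp continuous_fst)
  exact ((hn.pow 2).add ((continuous_snd).pow 2))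

lemma continuous_dH (ξ : Heis n) : Continuous fun ζ : Heis n => dH ξ ζ := by
  have h : (fun ζ : Heis n => dH ξ ζ) = fun ζ => korNorm (hmul (hinv ξ) ζ) :=
    funext fun ζ => dH_eq ξ ζ
  rw [h]
  apply continuous_korNorm.comp
  have h2 : Continuous fun ζ : Heis n => (hermInner (hinv ξ).1 ζ.1).im := by
    apply Complex.continuous_im.comp
    unfold hermInner
    exact continuous_finset_sum _ fun j _ =>
      continuous_const.mul (Complex.continuous_conj.comp
        ((continuous_apply j).comp continuous_fst))
  exact Continuous.prodMk (continuous_const.add continuous_fst)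
    ((continuous_const.add continuous_snd).add (continuous_const.mul h2))

lemma closure_ball_eq (ξ : Heis n) {lam : ℝ} (hlam : 0 < lam) :
    closure (ball ξ lam) = {ζ | dH ξ ζ ≤ lam} := by
  apply Set.Subset.antisymm
  · exact closure_minimal (fun ζ h => (le_of_lt h : dH ξ ζ ≤ lam))
      (isClosed_le (continuous_dH ξ) continuous_const)
  · intro ζ hζ
    set b := hmul (hinv ξ) ζ with hb
    have hkb : korNorm b ≤ lam := by rw [hb, ← dH_eq]; exact hζ
    set f : ℝ → Heis n := fun s => hmul ξ (dil s b) with hf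
    have hf1 : f 1 = ζ := by
      have : dil 1 b = b := by
        refine Prod.ext (funext fun j => ?_) ?_ <;> simp [dil]
      show hmul ξ (dil 1 b) = ζ
      rw [this, hb]
      exact cancel_left' ξ ζ
    have hcont : Continuous f := by
      have h2 : Continuous fun s : ℝ => (hermInner ξ.1 (fun j => (s:ℂ) * b.1 j)).im := by
        apply Complex.continuous_im.comp
        unfold hermInner
        exact continuous_finset_sum _ fun j _ =>
          continuous_const.mul (Complex.continuous_conj.comp
            (Complex.continuous_ofReal.mul continuous_const))
      unfold f
      unfold hmul dil
      apply Continuous.prodMk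
      · apply continuous_pi
        intro j
        exact continuous_const.add (Complex.continuous_ofReal.mul continuous_const)
      · exact (continuous_const.add ((continuous_pow 2).mul continuous_const)).add
          (continuous_const.mul h2)
    have htend : Filter.Tendsto f (nhdsWithin 1 (Set.Iio 1)) (nhds ζ) := by
      rw [← hf1]
      exact (hcont.continuousAt).continuousWithinAt.tendsto
    refine mem_closure_of_tendsto htend ?_
    filter_upwards [Ioo_mem_nhdsLT_of_mem (Set.mem_Ioc.mpr ⟨zero_lt_one, le_refl (1:ℝ)⟩)]
      with s hs
    have h0s : 0 ≤ s := le_of_lt hs.1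
    have : dH ξ (f s) = s * korNorm b := by
      rw [hf]
      rw [dH_hmul, korNorm_dil h0s]
    show dH ξ (f s) < lam
    rw [this]
    calc s * korNorm b ≤ s * lam := by
          apply mul_le_mul_of_nonneg_left hkb h0s
      _ < lam := by nlinarith [hs.2]

end HeisAux


open HeisAux

/-- Φ_{ξ,λ}^β maps B_λ(ξ)∖{ξ} onto Σ_λ(ξ) and vice versa. -/
theorem phi_maps_ball_to_exterior (n : ℕ) (ξ : Heis n) (lam : ℝ) (hlam : 0 < lam) (β : ℝ) :
    Phi ξ lam β '' (ball ξ lam \ {ξ}) = (closure (ball ξ lam))ᶜ ∧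
    Phi ξ lam β '' (closure (ball ξ lam))ᶜ = ball ξ lam \ {ξ} := by
  have hclos := closure_ball_eq ξ hlam
  -- basic facts
  have hzero : ∀ ζ : Heis n, hmul (hinv ξ) ζ = 0 ↔ ζ = ξ := by
    intro ζ
    constructor
    · intro h
      have h2 := congrArg (hmul ξ) h
      rw [cancel_left'] at h2
      rw [h2]
      refine Prod.ext ?_ ?_
      · show ξ.1 + 0 = ξ.1; simp
      · show ξ.2 + 0 + 2 * (hermInner ξ.1 0).im = ξ.2; simp [hermInner]
    · rintro rfl; exact hinv_hmul_self _
  have key1 : ∀ ζ : Heis n, ζ ∈ ball ξ lam \ {ξ} →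
      Phi ξ lam β ζ ∈ (closure (ball ξ lam))ᶜ := by
    rintro ζ ⟨hball, hne⟩
    set a := hmul (hinv ξ) ζ with ha
    have ha0 : a ≠ 0 := fun hc => hne ((hzero ζ).mp hc)
    have hka : korNorm a < lam := by rw [ha, ← dH_eq]; exact hball
    have hkpos := korNorm_pos ha0
    rw [Set.mem_compl_iff, hclos, Set.mem_setOf_eq, not_le, Phi_eq, dH_hmul,
      korNorm_g ξ β ha0 hlam]
    rw [lt_div_iff₀ hkpos]
    nlinarith
  have key2 : ∀ η : Heis n, η ∈ (closure (ball ξ lam))ᶜ →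
      Phi ξ lam β η ∈ ball ξ lam \ {ξ} := by
    intro η hη
    rw [Set.mem_compl_iff, hclos, Set.mem_setOf_eq, not_le] at hη
    set b := hmul (hinv ξ) η with hb
    have hkb : lam < korNorm b := by rw [hb, ← dH_eq]; exact hη
    have hb0 : b ≠ 0 := by
      intro hc
      rw [hc, korNorm_eq_zero_iff.mpr rfl] at hkb
      exact absurd hkb (not_lt.mpr hlam.le)
    constructor
    · show dH ξ _ < lam
      rw [Phi_eq, dH_hmul, korNorm_g ξ β hb0 hlam, div_lt_iff₀ (korNorm_pos hb0)]
      nlinarith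
    · show Phi ξ lam β η ≠ ξ
      rw [Phi_eq]
      intro hc
      have h2 : g ξ lam β b = 0 := by
        have := congrArg (hmul (hinv ξ)) hc
        rw [cancel_left, hinv_hmul_self] at this
        exact this
      exact g_ne_zero ξ β hb0 hlam h2
  have hPhiPhi : ∀ ζ : Heis n, ζ ≠ ξ → Phi ξ lam β (Phi ξ lam β ζ) = ζ := by
    intro ζ hne
    have ha0 : hmul (hinv ξ) ζ ≠ 0 := fun hc => hne ((hzero ζ).mp hc)
    rw [Phi_eq, Phi_eq, cancel_left, g_involution ξ β ha0 hlam, cancel_left']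
  constructor
  · apply Set.Subset.antisymm
    · rintro η ⟨ζ, hζ, rfl⟩
      exact key1 ζ hζ
    · intro η hη
      have hne : η ≠ ξ := by
        intro hc
        rw [Set.mem_compl_iff, hclos, Set.mem_setOf_eq, not_le, hc,
          dH_self_eq_zero_iff.mpr rfl] at hη
        exact absurd hη (not_lt.mpr hlam.le)
      exact ⟨Phi ξ lam β η, key2 η hη, hPhiPhi η hne⟩
  · apply Set.Subset.antisymm
    · rintro η ⟨ζ, hζ, rfl⟩
      exact key2 ζ hζ
    · rintro ζ hζ
      refine ⟨Phi ξ lam β ζ, key1 ζ hζ, hPhiPhi ζ hζ.2⟩
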